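/- Let h(x) = gcd(a(x), b(x), x^ℓ - 1) in F_q[x]. Then the rank of the ℓ×2ℓ block matrix H_X = (a(P) | b(P)) equals ℓ - deg h(x). -/

import Mathlib

open Polynomial Matrix
open scoped Classical

/-- The `ℓ × ℓ` cyclic permutation matrix `P` with `P eᵢ = e_{i+1 mod ℓ}`. -/
def cyclicP (F : Type*) [Semiring F] (n : ℕ) [NeZero n] : Matrix (Fin n) (Fin n) F :=
  Matrix.of fun i j => if i = j + 1 then 1 else 0

lemma range_fromColumns_mulVecLin {F : Type*} [Field F] {k n₁ n₂ : ℕ}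
    (A : Matrix (Fin k) (Fin n₁) F) (B : Matrix (Fin k) (Fin n₂) F) :
    LinearMap.range (fromCols A B).mulVecLin =
      LinearMap.range A.mulVecLin ⊔ LinearMap.range B.mulVecLin := by
  apply le_antisymm
  · rintro x ⟨v, rfl⟩
    rw [mulVecLin_apply]
    have hv : v = Sum.elim (v ∘ Sum.inl) (v ∘ Sum.inr) := by ext (i | i) <;> rfl
    rw [hv, fromCols_mulVec_sumElim]
    exact Submodule.add_mem_sup ⟨_, rfl⟩ ⟨_, rfl⟩
  · rw [sup_le_iff]
    constructor
    · rintro x ⟨v, rfl⟩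
      exact ⟨Sum.elim v 0, by
        rw [mulVecLin_apply, fromCols_mulVec_sumElim, mulVecLin_apply, mulVec_zero, add_zero]⟩
    · rintro x ⟨v, rfl⟩
      exact ⟨Sum.elim 0 v, by
        rw [mulVecLin_apply, fromCols_mulVec_sumElim, mulVecLin_apply, mulVec_zero, zero_add]⟩

lemma range_leftMulMatrix_mulVecLin {F S : Type*} [Field F] [CommRing S] [Algebra F S]
    {n : Type*} [Fintype n] [DecidableEq n] (b : Module.Basis n F S) (x : S) :
    LinearMap.range (Algebra.leftMulMatrix b x).mulVecLin =
      Submodule.map (b.equivFun : S →ₗ[F] (n → F))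
        (LinearMap.range (LinearMap.mulLeft F x)) := by
  have heq : (Algebra.leftMulMatrix b x).mulVecLin =
      b.equivFun.toLinearMap ∘ₗ (LinearMap.mulLeft F x ∘ₗ b.equivFun.symm.toLinearMap) := by
    apply LinearMap.ext
    intro v
    have hv : v = ⇑(b.repr (b.equivFun.symm v)) := by
      conv_lhs => rw [← b.equivFun.apply_symm_apply v]
      rw [Module.Basis.equivFun_apply]
    conv_lhs => rw [hv]
    simp only [Matrix.mulVecLin_apply, LinearMap.comp_apply, LinearEquiv.coe_coe,
      LinearMap.mulLeft_apply]
    rw [Algebra.leftMulMatrix_mulVec_repr]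
    rfl
  rw [heq, LinearMap.range_comp, LinearMap.range_comp_of_range_eq_top]
  exact LinearEquiv.range _

/-- With `h(x) = gcd(a(x), b(x), x^ℓ - 1)`, the rank of `H_X = (a(P) | b(P))`
equals `ℓ - deg h`. -/
theorem stmt_4 (F : Type*) [Field F] [Fintype F] (ℓ : ℕ) [NeZero ℓ] (a b : Polynomial F)
    (ha : a.natDegree < ℓ) (hb : b.natDegree < ℓ) :
    (Matrix.fromCols (Polynomial.aeval (cyclicP F ℓ) a)
        (Polynomial.aeval (cyclicP F ℓ) b)).rank =
      ℓ - (EuclideanDomain.gcd (EuclideanDomain.gcd a b) ((X : Polynomial F) ^ ℓ - 1)).natDegree := by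
  classical
  have hℓ : ℓ ≠ 0 := NeZero.ne ℓ
  set m : Polynomial F := X ^ ℓ - 1 with hm_def
  have hm : m.Monic := by simpa using monic_X_pow_sub_C (1 : F) hℓ
  have hmdeg : m.natDegree = ℓ := by
    simpa using (natDegree_X_pow_sub_C (n := ℓ) (r := (1 : F)))
  have hm0 : m ≠ 0 := hm.ne_zero
  set g : Polynomial F := EuclideanDomain.gcd (EuclideanDomain.gcd a b) m with hg_def
  have hgm : g ∣ m := EuclideanDomain.gcd_dvd_right _ _
  have hga : g ∣ a := (EuclideanDomain.gcd_dvd_left _ _).trans (EuclideanDomain.gcd_dvd_left a b)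
  have hgb : g ∣ b := (EuclideanDomain.gcd_dvd_left _ _).trans (EuclideanDomain.gcd_dvd_right a b)
  have hg0 : g ≠ 0 := fun h => hm0 ((EuclideanDomain.gcd_eq_zero_iff.mp h).2)
  -- the power basis of `AdjoinRoot m`, reindexed by `Fin ℓ`
  set pb := AdjoinRoot.powerBasis' hm with hpb_def
  have hpbdim : pb.dim = ℓ := by rw [hpb_def, AdjoinRoot.powerBasis'_dim, hmdeg]
  set bR : Module.Basis (Fin ℓ) F (AdjoinRoot m) := pb.basis.reindex (finCongr hpbdim) with hbR_def
  have hroot : AdjoinRoot.root m ^ ℓ = 1 := by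
    have h0 : AdjoinRoot.mk m m = 0 := AdjoinRoot.mk_self
    rw [hm_def, _root_.map_sub, _root_.map_one, _root_.map_pow, AdjoinRoot.mk_X, sub_eq_zero] at h0
    exact h0
  have hbR : ∀ j : Fin ℓ, bR j = AdjoinRoot.root m ^ (j : ℕ) := by
    intro j
    rw [hbR_def, Module.Basis.reindex_apply, pb.basis_eq_pow]
    simp [hpb_def, AdjoinRoot.powerBasis'_gen]
  have hP : Algebra.leftMulMatrix bR (AdjoinRoot.root m) = cyclicP F ℓ := by
    ext i j
    rw [Algebra.leftMulMatrix_eq_repr_mul]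
    have hmul : AdjoinRoot.root m * bR j = bR (j + 1) := by
      rw [hbR j, hbR (j + 1), ← pow_succ']
      rw [pow_eq_pow_mod ((j : ℕ) + 1) hroot, pow_eq_pow_mod (((j + 1 : Fin ℓ) : ℕ)) hroot]
      congr 1
      rw [Fin.add_def]
      simp [Fin.val_one', Nat.mod_mod_of_dvd, Nat.add_mod, Nat.mod_eq_of_lt j.isLt]
    rw [hmul, Module.Basis.repr_self, Finsupp.single_apply]
    simp only [cyclicP, Matrix.of_apply]
    exact if_congr eq_comm rfl rfl
  have key : ∀ p : Polynomial F,
      aeval (cyclicP F ℓ) p = Algebra.leftMulMatrix bR (AdjoinRoot.mk m p) := by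
    intro p
    have h : ((Algebra.leftMulMatrix bR).comp (aeval (AdjoinRoot.root m)) :
        Polynomial F →ₐ[F] Matrix (Fin ℓ) (Fin ℓ) F) = aeval (cyclicP F ℓ) := by
      apply Polynomial.algHom_ext
      simp [AdjoinRoot.aeval_eq, AdjoinRoot.mk_X, hP]
    have h2 := DFunLike.congr_fun h p
    simpa [AdjoinRoot.aeval_eq] using h2.symm
  -- the sup of the ranges is the range of multiplication by `g`
  have hsup : LinearMap.range (LinearMap.mulLeft F (AdjoinRoot.mk m a)) ⊔
      LinearMap.range (LinearMap.mulLeft F (AdjoinRoot.mk m b)) =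
      LinearMap.range (LinearMap.mulLeft F (AdjoinRoot.mk m g)) := by
    apply le_antisymm
    · rw [sup_le_iff]
      constructor
      · rintro x ⟨r, rfl⟩
        obtain ⟨c, hc⟩ := hga
        refine ⟨AdjoinRoot.mk m c * r, ?_⟩
        rw [LinearMap.mulLeft_apply, LinearMap.mulLeft_apply, hc, _root_.map_mul]
        ring
      · rintro x ⟨r, rfl⟩
        obtain ⟨c, hc⟩ := hgb
        refine ⟨AdjoinRoot.mk m c * r, ?_⟩
        rw [LinearMap.mulLeft_apply, LinearMap.mulLeft_apply, hc, _root_.map_mul]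
        ring
    · rintro x ⟨r, rfl⟩
      set u := EuclideanDomain.gcdA a b * EuclideanDomain.gcdA (EuclideanDomain.gcd a b) m with hu
      set v := EuclideanDomain.gcdB a b * EuclideanDomain.gcdA (EuclideanDomain.gcd a b) m with hv
      set w := EuclideanDomain.gcdB (EuclideanDomain.gcd a b) m with hw
      have hgrepr : g = a * u + b * v + m * w := by
        rw [hu, hv, hw]
        have h1 := EuclideanDomain.gcd_eq_gcd_ab a b
        have h2 := EuclideanDomain.gcd_eq_gcd_ab (EuclideanDomain.gcd a b) m
        rw [hg_def, h2]
        nth_rewrite 1 [h1]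
        ring
      have h3 : (AdjoinRoot.mk m) g =
          (AdjoinRoot.mk m) a * (AdjoinRoot.mk m) u + (AdjoinRoot.mk m) b * (AdjoinRoot.mk m) v := by
        rw [hgrepr]
        simp [_root_.map_add, _root_.map_mul, AdjoinRoot.mk_self]
      have hx : LinearMap.mulLeft F ((AdjoinRoot.mk m) g) r =
          (AdjoinRoot.mk m) a * ((AdjoinRoot.mk m) u * r) +
            (AdjoinRoot.mk m) b * ((AdjoinRoot.mk m) v * r) := by
        rw [LinearMap.mulLeft_apply, h3]
        ring
      rw [hx]
      exact Submodule.add_mem_sup ⟨_, rfl⟩ ⟨_, rfl⟩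
  -- the dimension of the range of multiplication by `g`
  have hfinal : Module.finrank F
      (LinearMap.range (LinearMap.mulLeft F ((AdjoinRoot.mk m) g))) = ℓ - g.natDegree := by
    have hlc : g.leadingCoeff ≠ 0 := leadingCoeff_ne_zero.2 hg0
    set gm : Polynomial F := g * C (g.leadingCoeff)⁻¹ with hgm_def
    have hgmm : gm.Monic := monic_mul_leadingCoeff_inv hg0
    have hCC : (AdjoinRoot.mk m) (C (g.leadingCoeff)⁻¹) * (AdjoinRoot.mk m) (C g.leadingCoeff)
        = 1 := by
      rw [← _root_.map_mul, ← C_mul, inv_mul_cancel₀ hlc, C_1, _root_.map_one]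
    have hrange_eq : LinearMap.range (LinearMap.mulLeft F ((AdjoinRoot.mk m) g)) =
        LinearMap.range (LinearMap.mulLeft F ((AdjoinRoot.mk m) gm)) := by
      apply le_antisymm
      · rintro x ⟨r, rfl⟩
        refine ⟨(AdjoinRoot.mk m) (C g.leadingCoeff) * r, ?_⟩
        rw [LinearMap.mulLeft_apply, LinearMap.mulLeft_apply, hgm_def, _root_.map_mul]
        calc (AdjoinRoot.mk m) g * (AdjoinRoot.mk m) (C g.leadingCoeff⁻¹) *
              ((AdjoinRoot.mk m) (C g.leadingCoeff) * r)
            = (AdjoinRoot.mk m) g *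
              (((AdjoinRoot.mk m) (C g.leadingCoeff⁻¹) * (AdjoinRoot.mk m) (C g.leadingCoeff)) * r) := by
              ring
          _ = (AdjoinRoot.mk m) g * r := by rw [hCC, one_mul]
      · rintro x ⟨r, rfl⟩
        refine ⟨(AdjoinRoot.mk m) (C (g.leadingCoeff)⁻¹) * r, ?_⟩
        rw [LinearMap.mulLeft_apply, LinearMap.mulLeft_apply, hgm_def, _root_.map_mul]
        ring
    have hgmdeg : gm.natDegree = g.natDegree := by
      rw [hgm_def, natDegree_mul hg0 (by simp [C_eq_zero, inv_ne_zero hlc]), natDegree_C, add_zero]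
    have hgmdvd : gm ∣ m := by
      refine dvd_trans ⟨C g.leadingCoeff, ?_⟩ hgm
      rw [hgm_def, mul_assoc, ← C_mul, inv_mul_cancel₀ hlc, C_1, mul_one]
    obtain ⟨d, hd⟩ := hgmdvd
    have hdmonic : d.Monic := hgmm.of_mul_monic_left (hd ▸ hm)
    have hddeg : gm.natDegree + d.natDegree = ℓ := by
      rw [← natDegree_mul hgmm.ne_zero hdmonic.ne_zero, ← hd, hmdeg]
    set ψ : Polynomial F →ₗ[F] AdjoinRoot m :=
      (LinearMap.mulLeft F ((AdjoinRoot.mk m) gm)) ∘ₗ (aeval (AdjoinRoot.root m)).toLinearMap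
      with hψ_def
    have hψrange : LinearMap.range ψ =
        LinearMap.range (LinearMap.mulLeft F ((AdjoinRoot.mk m) gm)) := by
      rw [hψ_def]
      apply LinearMap.range_comp_of_range_eq_top
      rw [LinearMap.range_eq_top]
      intro x
      obtain ⟨p, rfl⟩ := AdjoinRoot.mk_surjective x
      exact ⟨p, AdjoinRoot.aeval_eq p⟩
    have hψker : LinearMap.ker ψ = (Ideal.span {d} : Ideal (Polynomial F)).restrictScalars F := by
      ext p
      simp only [LinearMap.mem_ker, hψ_def, LinearMap.comp_apply, AlgHom.toLinearMap_apply,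
        AdjoinRoot.aeval_eq, LinearMap.mulLeft_apply, Submodule.restrictScalars_mem,
        Ideal.mem_span_singleton]
      rw [← _root_.map_mul, AdjoinRoot.mk_eq_zero, hd]
      exact mul_dvd_mul_iff_left hgmm.ne_zero
    have hAR : Module.finrank F (AdjoinRoot d) = d.natDegree := by
      rw [(AdjoinRoot.powerBasis' hdmonic).finrank, AdjoinRoot.powerBasis'_dim]
    have h5 : Module.finrank F (LinearMap.range ψ) = d.natDegree := by
      rw [← LinearEquiv.finrank_eq ψ.quotKerEquivRange, hψker,
        LinearEquiv.finrank_eq (Submodule.Quotient.restrictScalarsEquiv F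
          (Ideal.span {d} : Ideal (Polynomial F)))]
      exact hAR
    rw [hrange_eq, ← hψrange, h5]
    omega
  -- assemble
  have hrank : (Matrix.fromCols (Polynomial.aeval (cyclicP F ℓ) a)
        (Polynomial.aeval (cyclicP F ℓ) b)).rank =
      Module.finrank F (LinearMap.range (Matrix.fromCols (Polynomial.aeval (cyclicP F ℓ) a)
        (Polynomial.aeval (cyclicP F ℓ) b)).mulVecLin) := rfl
  rw [hrank, range_fromColumns_mulVecLin, key a, key b,
    range_leftMulMatrix_mulVecLin, range_leftMulMatrix_mulVecLin,
    ← Submodule.map_sup, hsup, LinearEquiv.finrank_map_eq, hfinal]
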